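/- Let P = (X,≺) be a finite poset with n elements and z₁ ≺ z₂ ≺ z₃ distinct. If F(k,ℓ) > 0, then F(k+1,ℓ) ≤ 2kℓ·F(k,ℓ). -/

import Mathlib

set_option maxHeartbeats 1000000
set_option linter.unusedSectionVars false
set_option linter.unusedVariables false

namespace RBU
variable {n : ℕ}

def mvFun (s t j : Fin n) : Fin n :=
  ⟨if j.val = s.val then t.val
   else if s.val < j.val ∧ j.val ≤ t.val then j.val - 1
   else if t.val ≤ j.val ∧ j.val < s.val then j.val + 1
   else j.val, by
    have := s.isLt; have := t.isLt; have := j.isLt; split_ifs <;> omega⟩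

lemma mvFun_inv (s t j : Fin n) : mvFun t s (mvFun s t j) = j := by
  have := s.isLt; have := t.isLt; have := j.isLt
  apply Fin.ext
  simp only [mvFun]
  split_ifs <;> omega

def mv (s t : Fin n) : Equiv.Perm (Fin n) :=
  ⟨mvFun s t, mvFun t s, mvFun_inv s t, mvFun_inv t s⟩

variable {X : Type} [PartialOrder X] [Fintype X]

/-- Move element `x` to position `t`, shifting things in between. -/
def moveL (L : X ≃ Fin n) (x : X) (t : Fin n) : X ≃ Fin n := L.trans (mv (L x) t)

lemma moveL_val (L : X ≃ Fin n) (x : X) (t : Fin n) (w : X) :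
    ((moveL L x t) w).val =
    (if (L w).val = (L x).val then t.val
     else if (L x).val < (L w).val ∧ (L w).val ≤ t.val then (L w).val - 1
     else if t.val ≤ (L w).val ∧ (L w).val < (L x).val then (L w).val + 1
     else (L w).val) := rfl

lemma cancel1 (M : X ≃ Fin n) (s t : Fin n) : (M.trans (mv s t)).trans (mv t s) = M :=
  Equiv.ext fun w => mvFun_inv s t (M w)

lemma val_ne_of_ne (L : X ≃ Fin n) {a b : X} (h : a ≠ b) : (L a).val ≠ (L b).val := by
  intro hv; exact h (L.injective (Fin.ext hv))

lemma move_ext {L : X ≃ Fin n} (hL : ∀ a b : X, a < b → L a < L b) (x : X) (t : Fin n)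
    (h1 : ∀ w, (L x).val < (L w).val → (L w).val ≤ t.val → ¬ x < w)
    (h2 : ∀ w, t.val ≤ (L w).val → (L w).val < (L x).val → ¬ w < x) :
    ∀ a b : X, a < b → (moveL L x t) a < (moveL L x t) b := by
  intro a b hab
  rw [Fin.lt_def, moveL_val, moveL_val]
  have hLab : (L a).val < (L b).val := hL a b hab
  have ht := t.isLt
  by_cases hax : a = x
  · subst hax
    have hb : ¬ ((L b).val ≤ t.val) := fun h => h1 b hLab h hab
    split_ifs <;> omega
  · by_cases hbx : b = x
    · subst hbx
      have ha : ¬ (t.val ≤ (L a).val) := fun h => h2 a h hLab hab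
      split_ifs <;> omega
    · have h1' := val_ne_of_ne L hax
      have h2' := val_ne_of_ne L hbx
      split_ifs <;> omega

lemma blocked_down {L : X ≃ Fin n}
    {P Q : ℕ} (u : X) (hu : (L u).val = P)
    (hblock : ∀ v : X, P < (L v).val → (L v).val ≤ Q →
      ∃ w : X, P ≤ (L w).val ∧ (L w).val < (L v).val ∧ w < v) :
    ∀ v : X, P < (L v).val → (L v).val ≤ Q → u < v := by
  intro v
  induction' hm : (L v).val using Nat.strong_induction_on with m IH generalizing v
  subst hm
  intro h1 h2
  obtain ⟨w, hw1, hw2, hw3⟩ := hblock v h1 h2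
  rcases eq_or_lt_of_le hw1 with heq | hlt
  · have : w = u := L.injective (Fin.ext (by omega))
    subst this; exact hw3
  · exact lt_trans (IH (L w).val hw2 w rfl hlt (by omega)) hw3

lemma blocked_up {L : X ≃ Fin n}
    {P Q : ℕ} (u : X) (hu : (L u).val = Q)
    (hblock : ∀ v : X, P ≤ (L v).val → (L v).val < Q →
      ∃ w : X, (L v).val < (L w).val ∧ (L w).val ≤ Q ∧ v < w) :
    ∀ v : X, P ≤ (L v).val → (L v).val < Q → v < u := by
  intro v
  induction' hm : Q - (L v).val using Nat.strong_induction_on with m IH generalizing v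
  subst hm
  intro h1 h2
  obtain ⟨w, hw1, hw2, hw3⟩ := hblock v h1 h2
  rcases eq_or_lt_of_le hw2 with heq | hlt
  · have : w = u := L.injective (Fin.ext (by omega))
    subst this; exact hw3
  · exact lt_trans hw3 (IH (Q - (L w).val) (by omega) w rfl (by omega) (by omega))

/-- Any finset of elements strictly between `a` and `b` has at most `E b - E a - 1` members. -/
lemma card_between_le (E : X ≃ Fin n) (hE : ∀ a b : X, a < b → E a < E b) (a b : X)
    (s : Finset X) (hs : ∀ w ∈ s, a < w ∧ w < b) :
    s.card ≤ (E b).val - (E a).val - 1 := by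
  have h1 : s.card = (s.image E).card := (Finset.card_image_of_injective s E.injective).symm
  have h2 : s.image E ⊆ Finset.Ioo (E a) (E b) := by
    intro q hq
    obtain ⟨w, hw, rfl⟩ := Finset.mem_image.mp hq
    obtain ⟨hw1, hw2⟩ := hs w hw
    exact Finset.mem_Ioo.mpr ⟨hE _ _ hw1, hE _ _ hw2⟩
  calc s.card = (s.image E).card := h1
    _ ≤ (Finset.Ioo (E a) (E b)).card := Finset.card_le_card h2
    _ = (E b).val - (E a).val - 1 := by rw [Fin.card_Ioo]


def fc (z₁ : X) (E : X ≃ Fin n) (q : ℕ) : Fin n := if h : q < n then ⟨q, h⟩ else E z₁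

lemma fc_eq (z₁ : X) (E : X ≃ Fin n) {q : ℕ} (r : Fin n) (h : q = r.val) :
    fc z₁ E q = r := by
  subst h; simp [fc, r.isLt]

def decode (z₁ : X) (k l : ℕ) (E : X ≃ Fin n) :
    (Fin k × Fin l) ⊕ (Fin k × Fin l) → X ≃ Fin n
  | .inl (i, j) =>
    if j.val = 0 then
      E.trans (mv (fc z₁ E ((E z₁).val - 1)) (fc z₁ E ((E z₁).val + i.val)))
    else
      (E.trans (mv (fc z₁ E ((E z₁).val + k + l + 1))
          (fc z₁ E ((E z₁).val + k + 1 + j.val)))).trans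
        (mv (fc z₁ E ((E z₁).val + k + 1)) (fc z₁ E ((E z₁).val + 1 + i.val)))
  | .inr (i, j) =>
    if j.val = 0 then
      E.trans (mv (fc z₁ E ((E z₁).val + k + l + 1)) (fc z₁ E ((E z₁).val + 1 + i.val)))
    else
      (E.trans (mv (fc z₁ E ((E z₁).val - 1)) (fc z₁ E ((E z₁).val + k + j.val)))).trans
        (mv (fc z₁ E ((E z₁).val + k)) (fc z₁ E ((E z₁).val + i.val)))


lemma cancelMove (M : X ≃ Fin n) (x : X) (t : Fin n) :
    (moveL M x t).trans (mv t (M x)) = M := cancel1 M (M x) t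

lemma key (z₁ z₂ z₃ : X)
    (h12 : z₁ < z₂) (h23 : z₂ < z₃) (k l : ℕ) (hk : 1 ≤ k) (hl : 1 ≤ l)
    (hB12 : ∀ s : Finset X, (∀ w ∈ s, z₁ < w ∧ w < z₂) → s.card + 1 ≤ k)
    (hB13 : ∀ s : Finset X, (∀ w ∈ s, z₁ < w ∧ w < z₃) → s.card + 1 ≤ k + l)
    (L : X ≃ Fin n)
    (hmono : ∀ a b : X, a < b → L a < L b)
    (g2 : (L z₂).val = (L z₁).val + (k + 1))
    (g3 : (L z₃).val = (L z₂).val + l) :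
    ∃ (E : X ≃ Fin n) (tg : (Fin k × Fin l) ⊕ (Fin k × Fin l)),
      ((∀ a b : X, a < b → E a < E b) ∧ (E z₂).val = (E z₁).val + k ∧
        (E z₃).val = (E z₂).val + l)
      ∧ decode z₁ k l E tg = L := by
  classical
  set p := (L z₁).val with hp
  have hn : p + k + 1 + l < n := by have := (L z₃).isLt; omega
  -- availability of single moves
  by_cases hA1 : ∃ x : X, (p < (L x).val ∧ (L x).val < p + k + 1) ∧
      ∀ w, p ≤ (L w).val → (L w).val < (L x).val → ¬ w < x
  · -- Type 1: move x down to position p, z₁ shifts up.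
    obtain ⟨x, ⟨hxl, hxu⟩, hav⟩ := hA1
    set t : Fin n := ⟨p, by omega⟩ with htdef
    have ht : t.val = p := rfl
    set E := moveL L x t with hE
    have e1 : (E z₁).val = p + 1 := by rw [hE, moveL_val, ht]; split_ifs <;> omega
    have e2 : (E z₂).val = p + k + 1 := by rw [hE, moveL_val, ht]; split_ifs <;> omega
    have e3 : (E z₃).val = p + k + 1 + l := by rw [hE, moveL_val, ht]; split_ifs <;> omega
    set i : Fin k := ⟨(L x).val - p - 1, by omega⟩ with hidef
    have hi : i.val = (L x).val - p - 1 := rfl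
    set j : Fin l := ⟨0, by omega⟩ with hjdef
    have hj : j.val = 0 := rfl
    refine ⟨E, .inl (i, j), ⟨?_, by omega, by omega⟩, ?_⟩
    · refine move_ext hmono x t ?_ ?_
      · intro w hw1 hw2 _
        rw [ht] at hw2; omega
      · intro w hw1 hw2
        rw [ht] at hw1; exact hav w hw1 hw2
    · show decode z₁ k l E (.inl (i, j)) = L
      simp only [decode]
      rw [if_pos hj]
      rw [fc_eq z₁ E t (by rw [e1, ht]; omega), fc_eq z₁ E (L x) (by rw [e1]; omega)]
      rw [hE]
      exact cancelMove L x t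
  by_cases hA2 : ∃ x : X, (p < (L x).val ∧ (L x).val < p + k + 1) ∧
      ∀ w, (L x).val < (L w).val → (L w).val ≤ p + k + 1 + l → ¬ x < w
  · -- Type 2: move x up above z₃.
    obtain ⟨x, ⟨hxl, hxu⟩, hav⟩ := hA2
    set t : Fin n := ⟨p + k + 1 + l, by omega⟩ with htdef
    have ht : t.val = p + k + 1 + l := rfl
    set E := moveL L x t with hE
    have e1 : (E z₁).val = p := by rw [hE, moveL_val, ht]; split_ifs <;> omega
    have e2 : (E z₂).val = p + k := by rw [hE, moveL_val, ht]; split_ifs <;> omega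
    have e3 : (E z₃).val = p + k + l := by rw [hE, moveL_val, ht]; split_ifs <;> omega
    set i : Fin k := ⟨(L x).val - p - 1, by omega⟩ with hidef
    have hi : i.val = (L x).val - p - 1 := rfl
    set j : Fin l := ⟨0, by omega⟩ with hjdef
    have hj : j.val = 0 := rfl
    refine ⟨E, .inr (i, j), ⟨?_, by omega, by omega⟩, ?_⟩
    · refine move_ext hmono x t ?_ ?_
      · intro w hw1 hw2
        rw [ht] at hw2; exact hav w hw1 hw2
      · intro w hw1 hw2 _
        rw [ht] at hw1; omega
    · show decode z₁ k l E (.inr (i, j)) = L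
      simp only [decode]
      rw [if_pos hj]
      rw [fc_eq z₁ E t (by rw [e1, ht]; omega), fc_eq z₁ E (L x) (by rw [e1]; omega)]
      rw [hE]
      exact cancelMove L x t
  -- derived blocking facts from failure of type 1
  have hA1' : ∀ x : X, p < (L x).val → (L x).val < p + k + 1 →
      ∃ w, p ≤ (L w).val ∧ (L w).val < (L x).val ∧ w < x := by
    intro x h1 h2; by_contra hc; push_neg at hc
    exact hA1 ⟨x, ⟨h1, h2⟩, hc⟩
  have hall1 : ∀ v : X, p < (L v).val → (L v).val ≤ p + k → z₁ < v := by
    refine blocked_down z₁ hp.symm ?_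
    intro v h1 h2; exact hA1' v h1 (by omega)
  by_cases hAX : ∃ x : X, (p < (L x).val ∧ (L x).val < p + k + 1) ∧
      ∀ w, (L x).val < (L w).val → (L w).val ≤ p + k + 1 → ¬ x < w
  · -- x can cross z₂
    obtain ⟨x, ⟨hxl, hxu⟩, havX⟩ := hAX
    set t1 : Fin n := ⟨p + k + 1, by omega⟩ with ht1def
    have ht1 : t1.val = p + k + 1 := rfl
    set L' := moveL L x t1 with hL'
    have hmono' : ∀ a b : X, a < b → L' a < L' b := by
      refine move_ext hmono x t1 ?_ ?_
      · intro w hw1 hw2; rw [ht1] at hw2; exact havX w hw1 hw2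
      · intro w hw1 hw2 _; rw [ht1] at hw1; omega
    have hz1' : (L' z₁).val = p := by rw [hL', moveL_val, ht1]; split_ifs <;> omega
    have hz2' : (L' z₂).val = p + k := by rw [hL', moveL_val, ht1]; split_ifs <;> omega
    have hz3' : (L' z₃).val = p + k + 1 + l := by rw [hL', moveL_val, ht1]; split_ifs <;> omega
    have hhigh : ∀ w : X, p + k + 1 < (L' w).val → (L' w).val = (L w).val := by
      intro w hw; rw [hL', moveL_val, ht1] at hw ⊢; split_ifs at hw ⊢ <;> omega
    by_cases hAYu : ∃ y : X, (p + k + 1 < (L y).val ∧ (L y).val < p + k + 1 + l) ∧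
        ∀ w, (L y).val < (L w).val → (L w).val ≤ p + k + 1 + l → ¬ y < w
    · -- Type 3a
      obtain ⟨y, ⟨hyl, hyu⟩, havY⟩ := hAYu
      have hy' : (L' y).val = (L y).val := by
        rw [hL', moveL_val, ht1]; split_ifs <;> omega
      set t2 : Fin n := ⟨p + k + 1 + l, by omega⟩ with ht2def
      have ht2 : t2.val = p + k + 1 + l := rfl
      set E := moveL L' y t2 with hE
      have hmonoE : ∀ a b : X, a < b → E a < E b := by
        refine move_ext hmono' y t2 ?_ ?_
        · intro w hw1 hw2
          rw [hy'] at hw1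
          have hw3 : (L' w).val = (L w).val := hhigh w (by omega)
          rw [hw3] at hw1 hw2; rw [ht2] at hw2
          exact havY w hw1 hw2
        · intro w hw1 hw2 _
          rw [ht2] at hw1; rw [hy'] at hw2; omega
      have e1 : (E z₁).val = p := by
        rw [hE, moveL_val, ht2, hz1', hy']; split_ifs <;> omega
      have e2 : (E z₂).val = p + k := by
        rw [hE, moveL_val, ht2, hz2', hy']; split_ifs <;> omega
      have e3 : (E z₃).val = p + k + l := by
        rw [hE, moveL_val, ht2, hz3', hy']; split_ifs <;> omega
      obtain ⟨i, hi⟩ : ∃ i : Fin k, i.val = (L x).val - p - 1 := ⟨⟨_, by omega⟩, rfl⟩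
      obtain ⟨j, hj⟩ : ∃ j : Fin l, j.val = (L y).val - p - k - 1 := ⟨⟨_, by omega⟩, rfl⟩
      refine ⟨E, .inl (i, j), ⟨hmonoE, by omega, by omega⟩, ?_⟩
      simp only [decode]
      rw [if_neg (show ¬(j.val = 0) by omega)]
      rw [fc_eq z₁ E t2 (by omega), fc_eq z₁ E (L' y) (by omega),
          fc_eq z₁ E t1 (by omega), fc_eq z₁ E (L x) (by omega)]
      rw [hE, hL']
      rw [cancelMove (moveL L x t1) y t2, cancelMove L x t1]
    by_cases hAYd : ∃ y : X, (p + k + 1 < (L y).val ∧ (L y).val < p + k + 1 + l) ∧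
        ∀ w, p ≤ (L w).val → (L w).val < (L y).val → ¬ w < y
    · -- Type 3b
      obtain ⟨y, ⟨hyl, hyu⟩, havY⟩ := hAYd
      have hy' : (L' y).val = (L y).val := by
        rw [hL', moveL_val, ht1]; split_ifs <;> omega
      have hlow : ∀ w : X, p ≤ (L' w).val → (L' w).val < (L y).val →
          p ≤ (L w).val ∧ (L w).val < (L y).val := by
        intro w hw1 hw2; rw [hL', moveL_val, ht1] at hw1 hw2
        constructor <;> (split_ifs at hw1 hw2 <;> omega)
      set t2 : Fin n := ⟨p, by omega⟩ with ht2def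
      have ht2 : t2.val = p := rfl
      set E := moveL L' y t2 with hE
      have hmonoE : ∀ a b : X, a < b → E a < E b := by
        refine move_ext hmono' y t2 ?_ ?_
        · intro w hw1 hw2 _
          rw [ht2] at hw2; rw [hy'] at hw1; omega
        · intro w hw1 hw2
          rw [ht2] at hw1; rw [hy'] at hw2
          obtain ⟨hw3, hw4⟩ := hlow w hw1 hw2
          exact havY w hw3 hw4
      have e1 : (E z₁).val = p + 1 := by
        rw [hE, moveL_val, ht2, hz1', hy']; split_ifs <;> omega
      have e2 : (E z₂).val = p + k + 1 := by
        rw [hE, moveL_val, ht2, hz2', hy']; split_ifs <;> omega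
      have e3 : (E z₃).val = p + k + 1 + l := by
        rw [hE, moveL_val, ht2, hz3', hy']; split_ifs <;> omega
      obtain ⟨i, hi⟩ : ∃ i : Fin k, i.val = (L x).val - p - 1 := ⟨⟨_, by omega⟩, rfl⟩
      obtain ⟨j, hj⟩ : ∃ j : Fin l, j.val = (L y).val - p - k - 1 := ⟨⟨_, by omega⟩, rfl⟩
      refine ⟨E, .inr (i, j), ⟨hmonoE, by omega, by omega⟩, ?_⟩
      simp only [decode]
      rw [if_neg (show ¬(j.val = 0) by omega)]
      rw [fc_eq z₁ E t2 (by omega), fc_eq z₁ E (L' y) (by omega),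
          fc_eq z₁ E t1 (by omega), fc_eq z₁ E (L x) (by omega)]
      rw [hE, hL']
      rw [cancelMove (moveL L x t1) y t2, cancelMove L x t1]
    · -- Case II contradiction: z₁ < v < z₃ for all v in positions (p, p+k+l+1)
      exfalso
      have hA2' : ∀ x : X, p < (L x).val → (L x).val < p + k + 1 →
          ∃ w, (L x).val < (L w).val ∧ (L w).val ≤ p + k + 1 + l ∧ x < w := by
        intro v h1 h2; by_contra hc; push_neg at hc
        exact hA2 ⟨v, ⟨h1, h2⟩, fun w hw1 hw2 => hc w hw1 hw2⟩
      have hAYu' : ∀ y : X, p + k + 1 < (L y).val → (L y).val < p + k + 1 + l →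
          ∃ w, (L y).val < (L w).val ∧ (L w).val ≤ p + k + 1 + l ∧ y < w := by
        intro v h1 h2; by_contra hc; push_neg at hc
        exact hAYu ⟨v, ⟨h1, h2⟩, fun w hw1 hw2 => hc w hw1 hw2⟩
      have hAYd' : ∀ y : X, p + k + 1 < (L y).val → (L y).val < p + k + 1 + l →
          ∃ w, p ≤ (L w).val ∧ (L w).val < (L y).val ∧ w < y := by
        intro v h1 h2; by_contra hc; push_neg at hc
        exact hAYd ⟨v, ⟨h1, h2⟩, fun w hw1 hw2 => hc w hw1 hw2⟩
      have hall2 : ∀ v : X, p < (L v).val → (L v).val ≤ p + k + l → z₁ < v := by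
        refine blocked_down z₁ hp.symm ?_
        intro v h1 h2
        rcases lt_trichotomy (L v).val (p + k + 1) with hc | hc | hc
        · exact ⟨z₁, by omega, by omega, hall1 v h1 (by omega)⟩
        · have : v = z₂ := L.injective (Fin.ext (by omega))
          subst this
          exact ⟨z₁, by omega, by omega, h12⟩
        · exact hAYd' v hc (by omega)
      have hall3 : ∀ v : X, p + 1 ≤ (L v).val → (L v).val < p + k + 1 + l → v < z₃ := by
        refine blocked_up z₃ (by omega) ?_
        intro v h1 h2
        rcases lt_trichotomy (L v).val (p + k + 1) with hc | hc | hc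
        · exact hA2' v (by omega) hc
        · have : v = z₂ := L.injective (Fin.ext (by omega))
          subst this
          exact ⟨z₃, by omega, by omega, h23⟩
        · exact hAYu' v hc h2
      set s : Finset X := (Finset.Ioo (L z₁) (L z₃)).image L.symm with hsdef
      have hcard : s.card = k + l := by
        rw [hsdef, Finset.card_image_of_injective _ L.symm.injective, Fin.card_Ioo]
        omega
      have hmem : ∀ w ∈ s, z₁ < w ∧ w < z₃ := by
        intro w hw
        obtain ⟨q, hq, rfl⟩ := Finset.mem_image.mp hw
        rw [Finset.mem_Ioo] at hq
        have hq1 : (L (L.symm q)).val = q.val := by rw [Equiv.apply_symm_apply]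
        obtain ⟨ha, hb⟩ := hq
        rw [Fin.lt_def] at ha hb
        exact ⟨hall2 _ (by omega) (by omega), hall3 _ (by omega) (by omega)⟩
      have := hB13 s hmem
      omega
  · -- Case I contradiction: z₁ < v < z₂ for all v in positions (p, p+k+1)
    exfalso
    have hAX' : ∀ x : X, p < (L x).val → (L x).val < p + k + 1 →
        ∃ w, (L x).val < (L w).val ∧ (L w).val ≤ p + k + 1 ∧ x < w := by
      intro v h1 h2; by_contra hc; push_neg at hc
      exact hAX ⟨v, ⟨h1, h2⟩, fun w hw1 hw2 => hc w hw1 hw2⟩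
    have hallX : ∀ v : X, p + 1 ≤ (L v).val → (L v).val < p + k + 1 → v < z₂ := by
      refine blocked_up z₂ (by omega) ?_
      intro v h1 h2
      exact hAX' v (by omega) h2
    set s : Finset X := (Finset.Ioo (L z₁) (L z₂)).image L.symm with hsdef
    have hcard : s.card = k := by
      rw [hsdef, Finset.card_image_of_injective _ L.symm.injective, Fin.card_Ioo]
      omega
    have hmem : ∀ w ∈ s, z₁ < w ∧ w < z₂ := by
      intro w hw
      obtain ⟨q, hq, rfl⟩ := Finset.mem_image.mp hw
      rw [Finset.mem_Ioo] at hq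
      have hq1 : (L (L.symm q)).val = q.val := by rw [Equiv.apply_symm_apply]
      obtain ⟨ha, hb⟩ := hq
      rw [Fin.lt_def] at ha hb
      exact ⟨hall1 _ (by omega) (by omega), hallX _ (by omega) (by omega)⟩
    have := hB12 s hmem
    omega


end RBU

/-- The number of linear extensions `L` of a finite poset `X`
(order-preserving bijections `X ≃ Fin (card X)`) such that
`L z₂ − L z₁ = k` and `L z₃ − L z₂ = l`. -/
noncomputable def F (X : Type) [PartialOrder X] [Fintype X] (z₁ z₂ z₃ : X) (k l : ℕ) : ℕ :=
  Nat.card {L : X ≃ Fin (Fintype.card X) // (∀ a b : X, a < b → L a < L b) ∧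
    (L z₂ : ℕ) = (L z₁ : ℕ) + k ∧ (L z₃ : ℕ) = (L z₂ : ℕ) + l}

theorem ratio_bound_up_k (X : Type) [PartialOrder X] [Fintype X]
    (z₁ z₂ z₃ : X) (h12 : z₁ < z₂) (h23 : z₂ < z₃)
    (k l : ℕ) (hk : 1 ≤ k) (hl : 1 ≤ l)
    (hpos : 0 < F X z₁ z₂ z₃ k l) :
    F X z₁ z₂ z₃ (k + 1) l ≤ 2 * k * l * F X z₁ z₂ z₃ k l := by
  classical
  set n := Fintype.card X with hn
  -- The two subtypes
  let A := {L : X ≃ Fin n // (∀ a b : X, a < b → L a < L b) ∧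
    (L z₂ : ℕ) = (L z₁ : ℕ) + (k + 1) ∧ (L z₃ : ℕ) = (L z₂ : ℕ) + l}
  let B := {L : X ≃ Fin n // (∀ a b : X, a < b → L a < L b) ∧
    (L z₂ : ℕ) = (L z₁ : ℕ) + k ∧ (L z₃ : ℕ) = (L z₂ : ℕ) + l}
  have hFA : F X z₁ z₂ z₃ (k + 1) l = Nat.card A := rfl
  have hFB : F X z₁ z₂ z₃ k l = Nat.card B := rfl
  -- B is nonempty
  have hBne : Nonempty B := by
    by_contra h
    rw [not_nonempty_iff] at h
    rw [hFB, Nat.card_of_isEmpty] at hpos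
    omega
  obtain ⟨⟨L₀, hm₀, g₀2, g₀3⟩⟩ := hBne
  have hB12 : ∀ s : Finset X, (∀ w ∈ s, z₁ < w ∧ w < z₂) → s.card + 1 ≤ k := by
    intro s hs
    have := RBU.card_between_le L₀ hm₀ z₁ z₂ s hs
    omega
  have hB13 : ∀ s : Finset X, (∀ w ∈ s, z₁ < w ∧ w < z₃) → s.card + 1 ≤ k + l := by
    intro s hs
    have := RBU.card_between_le L₀ hm₀ z₁ z₃ s hs
    omega
  -- the injection
  have hkey : ∀ a : A, ∃ (E : X ≃ Fin n) (tg : (Fin k × Fin l) ⊕ (Fin k × Fin l)),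
      ((∀ x y : X, x < y → E x < E y) ∧ (E z₂).val = (E z₁).val + k ∧
        (E z₃).val = (E z₂).val + l)
      ∧ RBU.decode z₁ k l E tg = a.val := by
    intro a
    exact RBU.key z₁ z₂ z₃ h12 h23 k l hk hl hB12 hB13 a.val a.prop.1 a.prop.2.1 a.prop.2.2
  choose E tg hprop hdec using hkey
  let f : A → B × ((Fin k × Fin l) ⊕ (Fin k × Fin l)) :=
    fun a => ⟨⟨E a, hprop a⟩, tg a⟩
  have hinj : Function.Injective f := by
    intro a b hab
    have h1 : E a = E b := congrArg (fun q => q.1.val) hab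
    have h2 : tg a = tg b := congrArg Prod.snd hab
    have : a.val = b.val := by rw [← hdec a, ← hdec b, h1, h2]
    exact Subtype.ext this
  have hcard := Nat.card_le_card_of_injective f hinj
  rw [Nat.card_prod] at hcard
  have hT : Nat.card ((Fin k × Fin l) ⊕ (Fin k × Fin l)) = 2 * k * l := by
    simp [Nat.card_eq_fintype_card]
    ring
  rw [hT] at hcard
  rw [hFA, hFB]
  calc Nat.card A ≤ Nat.card B * (2 * k * l) := hcard
    _ = 2 * k * l * Nat.card B := by ring
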